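/- arXiv:2012.01662 — 2 statements merged into one kernel-verified Lean document; each statement's English description precedes it below -/
import Mathlib

section
/- Soundness of the semantic partial correctness calculus SEM: let G be a type, let Atom be a type of atomic commands with a given interpretation ⟦·⟧ₐ : Atom → G → Set (Option G), and let Prog be the inductive type of programs generated by atomic commands, sequential composition P;Q, finite nondeterministic choice, if C then P else Q, try C then P else Q, and iteration P!, with semantics ⟦·⟧ : Prog → G → Set (Option G) defined by: ⟦P;Q⟧ g = {none | none ∈ ⟦P⟧g} ∪ ⋃ H ∈ {H | some H ∈ ⟦P⟧g}, ⟦Q⟧H; choice is union; ⟦if C then P else Q⟧ g = {o | (g ∈ SUCCESS(C) ∧ o ∈ ⟦P⟧g) ∨ (g ∈ FAIL(C) ∧ o ∈ ⟦Q⟧g)}; ⟦try C then P else Q⟧ g = {o | (∃H, some H ∈ ⟦C⟧g ∧ o ∈ ⟦P⟧H) ∨ (g ∈ FAIL(C) ∧ o ∈ ⟦Q⟧g)}; and ⟦P!⟧ g = {some H | Relation.ReflTransGen (fun x y => some y ∈ ⟦P⟧x) g H ∧ H ∈ FAIL(P)}. Let derivability ⊢ {c} P {d} be the inductive predicate generated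 by the rules: [atom] ⊢ {c} a {Slp(c,⟦a⟧ₐ)} for atomic a; [choice] from ⊢ {c} Pᵢ {d} for all branches; [comp] from ⊢ {c} P {e} and ⊢ {e} Q {d}; [cons] from c ⊆ c', ⊢ {c'} P {d'}, d' ⊆ d; [if] from ⊢ {c ∩ SUCCESS(C)} P {d} and ⊢ {c ∩ FAIL(C)} Q {d}; [try] from ⊢ {c ∩ SUCCESS(C)} C;P {d} and ⊢ {c ∩ FAIL(C)} Q {d}; [alap] from ⊢ {c} P {c} conclude ⊢ {c} P! {c ∩ FAIL(P)}. Then ⊢ {c} P {d} implies that {c} P {d} is partially correct with respect to ⟦·⟧. -/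
/-- Programs generated by atomic commands, sequential composition, finite
nondeterministic choice, if-then-else, try-then-else, and iteration. -/
inductive Prog (Atom : Type) : Type where
  | atom : Atom → Prog Atom
  | seq : Prog Atom → Prog Atom → Prog Atom
  | choice : (n : ℕ) → (Fin n → Prog Atom) → Prog Atom
  | ite : Prog Atom → Prog Atom → Prog Atom → Prog Atom
  | tryE : Prog Atom → Prog Atom → Prog Atom → Prog Atom
  | loop : Prog Atom → Prog Atom

/-- Semantics of programs, given an interpretation `A` of atomic commands.
`some H` is a result graph, `none` is failure. -/
def Sem {G Atom : Type} (A : Atom → G → Set (Option G)) : Prog Atom → G → Set (Option G)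
  | .atom a => A a
  | .seq P Q => fun g =>
      {o | o = none ∧ none ∈ Sem A P g} ∪ ⋃ H ∈ {H : G | some H ∈ Sem A P g}, Sem A Q H
  | .choice n f => fun g => ⋃ i : Fin n, Sem A (f i) g
  | .ite C P Q => fun g =>
      {o | ((∃ H : G, some H ∈ Sem A C g) ∧ o ∈ Sem A P g) ∨
           (none ∈ Sem A C g ∧ o ∈ Sem A Q g)}
  | .tryE C P Q => fun g =>
      {o | (∃ H : G, some H ∈ Sem A C g ∧ o ∈ Sem A P H) ∨
           (none ∈ Sem A C g ∧ o ∈ Sem A Q g)}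
  | .loop P => fun g =>
      {o | ∃ H : G, o = some H ∧
        Relation.ReflTransGen (fun x y => some y ∈ Sem A P x) g H ∧ none ∈ Sem A P H}

/-- Graphs from which the program `C` can produce a result graph. -/
def SUCCESS {G Atom : Type} (A : Atom → G → Set (Option G)) (C : Prog Atom) : Set G :=
  {g : G | ∃ H : G, some H ∈ Sem A C g}

/-- Graphs from which the program `C` can fail. -/
def FAIL {G Atom : Type} (A : Atom → G → Set (Option G)) (C : Prog Atom) : Set G :=
  {g : G | none ∈ Sem A C g}

/-- Strongest liberal postcondition of a semantics `S`. -/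
def Slp {G : Type} (c : Set G) (S : G → Set (Option G)) : Set G :=
  {H : G | ∃ g ∈ c, some H ∈ S g}

/-- The triple `{c} P {d}` is partially correct w.r.t. the semantics. -/
def PartiallyCorrect {G Atom : Type} (A : Atom → G → Set (Option G))
    (c : Set G) (P : Prog Atom) (d : Set G) : Prop :=
  ∀ g ∈ c, ∀ H : G, some H ∈ Sem A P g → H ∈ d

/-- The semantic partial correctness calculus SEM. -/
inductive Deriv {G Atom : Type} (A : Atom → G → Set (Option G)) :
    Set G → Prog Atom → Set G → Prop where
  | atom (c : Set G) (a : Atom) : Deriv A c (.atom a) (Slp c (A a))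
  | choice {c d : Set G} {n : ℕ} {f : Fin n → Prog Atom} :
      (∀ i : Fin n, Deriv A c (f i) d) → Deriv A c (.choice n f) d
  | comp {c e d : Set G} {P Q : Prog Atom} :
      Deriv A c P e → Deriv A e Q d → Deriv A c (.seq P Q) d
  | cons {c c' d d' : Set G} {P : Prog Atom} :
      c ⊆ c' → Deriv A c' P d' → d' ⊆ d → Deriv A c P d
  | ifRule {c d : Set G} {C P Q : Prog Atom} :
      Deriv A (c ∩ SUCCESS A C) P d → Deriv A (c ∩ FAIL A C) Q d →
      Deriv A c (.ite C P Q) d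
  | tryRule {c d : Set G} {C P Q : Prog Atom} :
      Deriv A (c ∩ SUCCESS A C) (.seq C P) d → Deriv A (c ∩ FAIL A C) Q d →
      Deriv A c (.tryE C P Q) d
  | alap {c : Set G} {P : Prog Atom} :
      Deriv A c P c → Deriv A c (.loop P) (c ∩ FAIL A P)

/-- Soundness of the semantic partial correctness calculus SEM. -/
theorem SEM_sound {G Atom : Type} (A : Atom → G → Set (Option G))
    (c d : Set G) (P : Prog Atom) (h : Deriv A c P d) :
    PartiallyCorrect A c P d := by
  induction h with
  | atom c a =>
      intro g hg H hH
      exact ⟨g, hg, hH⟩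
  | choice hf ih =>
      intro g hg H hH
      simp only [Sem, Set.mem_iUnion] at hH
      obtain ⟨i, hi⟩ := hH
      exact ih i g hg H hi
  | comp hP hQ ihP ihQ =>
      intro g hg H hH
      rcases hH with ⟨h1, -⟩ | hH
      · exact absurd h1 (by simp)
      · simp only [Set.mem_iUnion] at hH
        obtain ⟨K, hK, hH⟩ := hH
        exact ihQ K (ihP g hg K hK) H hH
  | cons hcc' hP hd'd ih =>
      intro g hg H hH
      exact hd'd (ih g (hcc' hg) H hH)
  | ifRule hP hQ ihP ihQ =>
      intro g hg H hH
      rcases hH with ⟨hs, hH⟩ | ⟨hf, hH⟩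
      · exact ihP g ⟨hg, hs⟩ H hH
      · exact ihQ g ⟨hg, hf⟩ H hH
  | tryRule hP hQ ihP ihQ =>
      intro g hg H hH
      rcases hH with ⟨K, hK, hH⟩ | ⟨hf, hH⟩
      · exact ihP g ⟨hg, ⟨K, hK⟩⟩ H
          (Or.inr (Set.mem_iUnion.2 ⟨K, Set.mem_iUnion.2 ⟨hK, hH⟩⟩))
      · exact ihQ g ⟨hg, hf⟩ H hH
  | @alap c' P' hP ih =>
      have key : ∀ x y : G, Relation.ReflTransGen (fun a b => some b ∈ Sem A P' a) x y →
          x ∈ c' → y ∈ c' := by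
        intro x y hrt hx
        induction hrt with
        | refl => exact hx
        | tail _ hstep ihr => exact ih _ ihr _ hstep
      intro g hg H hH
      obtain ⟨H', heq, hrt, hfail⟩ := hH
      obtain rfl : H = H' := Option.some.inj heq
      exact ⟨key g H hrt hg, hfail⟩
end

section
/- Relative completeness of the semantic partial correctness calculus SEM (for break-free programs): with G, Atom, Prog, the semantics ⟦·⟧, and the derivability relation ⊢ {c} P {d} defined exactly as in the soundness theorem for SEM (rules [atom], [choice], [comp], [cons], [if], [try], [alap]), if the triple {c} P {d} is partially correct with respect to ⟦·⟧, then ⊢ {c} P {d} is derivable. -/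
theorem Deriv_slp {G Atom : Type} (A : Atom → G → Set (Option G))
    (P : Prog Atom) : ∀ c : Set G, Deriv A c P (Slp c (Sem A P)) := by
  induction P with
  | atom a => intro c; exact Deriv.atom c a
  | seq P Q ihP ihQ =>
      intro c
      refine Deriv.comp (ihP c) (Deriv.cons (le_refl _) (ihQ (Slp c (Sem A P))) ?_)
      rintro H ⟨g', ⟨g, hg, hgp⟩, hq⟩
      exact ⟨g, hg, Or.inr (Set.mem_biUnion hgp hq)⟩
  | choice n f ih =>
      intro c
      refine Deriv.choice fun i => Deriv.cons (le_refl _) (ih i c) ?_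
      rintro H ⟨g, hg, hi⟩
      exact ⟨g, hg, Set.mem_iUnion.2 ⟨i, hi⟩⟩
  | ite C P Q ihC ihP ihQ =>
      intro c
      refine Deriv.ifRule (Deriv.cons (le_refl _) (ihP _) ?_)
        (Deriv.cons (le_refl _) (ihQ _) ?_)
      · rintro H ⟨g, ⟨hg, hs⟩, hp⟩
        exact ⟨g, hg, Or.inl ⟨hs, hp⟩⟩
      · rintro H ⟨g, ⟨hg, hf⟩, hq⟩
        exact ⟨g, hg, Or.inr ⟨hf, hq⟩⟩
  | tryE C P Q ihC ihP ihQ =>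
      intro c
      refine Deriv.tryRule
        (Deriv.comp (ihC _) (Deriv.cons (le_refl _) (ihP _) ?_))
        (Deriv.cons (le_refl _) (ihQ _) ?_)
      · rintro H ⟨g', ⟨g, ⟨hg, _⟩, hc⟩, hp⟩
        exact ⟨g, hg, Or.inl ⟨g', hc, hp⟩⟩
      · rintro H ⟨g, ⟨hg, hf⟩, hq⟩
        exact ⟨g, hg, Or.inr ⟨hf, hq⟩⟩
  | loop P ih =>
      intro c
      set c' : Set G :=
        {H | ∃ g ∈ c, Relation.ReflTransGen (fun x y => some y ∈ Sem A P x) g H} with hc'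
      have hinv : Deriv A c' P c' := by
        refine Deriv.cons (le_refl _) (ih c') ?_
        rintro H ⟨g', ⟨g, hg, hreach⟩, hp⟩
        exact ⟨g, hg, hreach.tail hp⟩
      have hsub : c ⊆ c' := fun g hg => ⟨g, hg, Relation.ReflTransGen.refl⟩
      refine Deriv.cons hsub
        (Deriv.alap hinv) ?_
      rintro H ⟨⟨g, hg, hreach⟩, hfail⟩
      exact ⟨g, hg, ⟨H, rfl, hreach, hfail⟩⟩

/-- Relative completeness of the semantic partial correctness calculus SEM. -/
theorem SEM_relatively_complete {G Atom : Type} (A : Atom → G → Set (Option G))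
    (c d : Set G) (P : Prog Atom) (h : PartiallyCorrect A c P d) :
    Deriv A c P d := by
  refine Deriv.cons (le_refl _) (Deriv_slp A P c) ?_
  rintro H ⟨g, hg, hp⟩
  exact h g hg H hp
end
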